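/- Let A* be a generalized Mahalanobis operator on H and B* a generalized Mahalanobis operator on V satisfying ⟨A* x, y⟩ = ⟨B* x, y⟩ for all x, y ∈ V. Then A* minimizes g over all generalized Mahalanobis operators on H if and only if B* minimizes g_V over all generalized Mahalanobis operators on V, and in this case g(A*) = g_V(B*). -/

import Mathlib

open scoped RealInnerProductSpace

/-- A continuous linear operator on a real inner product space is a *generalized Mahalanobis
operator* if it is self-adjoint and positive definite. -/
def IsGenMahalanobis {H : Type*} [NormedAddCommGroup H] [InnerProductSpace ℝ H]
    (A : H →L[ℝ] H) : Prop :=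
  (∀ x y : H, ⟪A x, y⟫ = ⟪x, A y⟫) ∧ ∀ x : H, x ≠ 0 → 0 < ⟪A x, x⟫

/-- A linear operator on a (subspace viewed as an) inner product space is a *generalized
Mahalanobis operator* if it is self-adjoint and positive definite. -/
def IsGenMahalanobisLin {V : Type*} [NormedAddCommGroup V] [InnerProductSpace ℝ V]
    (B : V →ₗ[ℝ] V) : Prop :=
  (∀ x y : V, ⟪B x, y⟫ = ⟪x, B y⟫) ∧ ∀ x : V, x ≠ 0 → 0 < ⟪B x, x⟫

/-- The triplet-comparison empirical objective
`g(A) = Σ_i ℓ (sgn (‖z^i_1 - z^i_2‖_A - ‖z^i_1 - z^i_3‖_A)) (y i)`,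
where `‖x‖_A = √⟪A x, x⟫`. -/
noncomputable def tripObj {H : Type*} [NormedAddCommGroup H] [InnerProductSpace ℝ H]
    {n : ℕ} (ℓ : ℝ → ℝ → ℝ) (z₁ z₂ z₃ : Fin n → H) (y : Fin n → ℝ)
    (A : H → H) : ℝ :=
  ∑ i, ℓ (Real.sign (Real.sqrt ⟪A (z₁ i - z₂ i), z₁ i - z₂ i⟫ -
      Real.sqrt ⟪A (z₁ i - z₃ i), z₁ i - z₃ i⟫)) (y i)

/-- If `A` and `B` agree on `V` (in the quadratic-form sense), the objectives coincide. -/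
private lemma tripObj_eq_of_agree {H : Type*} [NormedAddCommGroup H] [InnerProductSpace ℝ H]
    (V : Submodule ℝ H) {n : ℕ} (ℓ : ℝ → ℝ → ℝ) (z₁ z₂ z₃ : Fin n → H) (y : Fin n → ℝ)
    (hz₁ : ∀ i, z₁ i ∈ V) (hz₂ : ∀ i, z₂ i ∈ V) (hz₃ : ∀ i, z₃ i ∈ V)
    (A : H → H) (B : V →ₗ[ℝ] V)
    (hab : ∀ x y' : V, ⟪A (x : H), (y' : H)⟫ = ⟪B x, y'⟫) :
    tripObj ℓ z₁ z₂ z₃ y A =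
      tripObj ℓ (fun i => (⟨z₁ i, hz₁ i⟩ : V)) (fun i => (⟨z₂ i, hz₂ i⟩ : V))
        (fun i => (⟨z₃ i, hz₃ i⟩ : V)) y ⇑B := by
  unfold tripObj
  refine Finset.sum_congr rfl fun i _ => ?_
  have h12 := hab (⟨z₁ i, hz₁ i⟩ - ⟨z₂ i, hz₂ i⟩) (⟨z₁ i, hz₁ i⟩ - ⟨z₂ i, hz₂ i⟩)
  have h13 := hab (⟨z₁ i, hz₁ i⟩ - ⟨z₃ i, hz₃ i⟩) (⟨z₁ i, hz₁ i⟩ - ⟨z₃ i, hz₃ i⟩)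
  simp only [AddSubgroupClass.coe_sub] at h12 h13
  rw [h12, h13]

/-- Any generalized Mahalanobis operator on `V` extends to one on `H` agreeing with it on `V`. -/
private lemma exists_ext {H : Type*} [NormedAddCommGroup H] [InnerProductSpace ℝ H]
    [CompleteSpace H] (V : Submodule ℝ H) [FiniteDimensional ℝ V]
    (B : V →ₗ[ℝ] V) (hB : IsGenMahalanobisLin B) :
    ∃ A : H →L[ℝ] H, IsGenMahalanobis A ∧
      ∀ x y' : V, ⟪A (x : H), (y' : H)⟫ = ⟪B x, y'⟫ := by
  have : CompleteSpace V := FiniteDimensional.complete ℝ V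
  set P := V.orthogonalProjectionOnto with hP
  set A : H →L[ℝ] H := V.subtypeL ∘L (LinearMap.toContinuousLinearMap B) ∘L P +
      (ContinuousLinearMap.id ℝ H - V.subtypeL ∘L P) with hA
  have hApp : ∀ x : H, A x = (↑(B (P x)) : H) + (x - ↑(P x)) := fun x => rfl
  have hsub : ∀ x : H, x - ↑(P x) ∈ Vᗮ := fun x => V.sub_starProjection_mem_orthogonal x
  have hInner : ∀ x u : H, ⟪A x, u⟫ = ⟪B (P x), P u⟫ + ⟪x - ↑(P x), u - ↑(P u)⟫ := by
    intro x u
    rw [hApp, inner_add_left]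
    congr 1
    · exact (Submodule.inner_orthogonalProjectionOnto_eq_of_mem_left (K := V) (B (P x)) u).symm
    · have h0 : ⟪x - ↑(P x), (↑(P u) : H)⟫ = 0 := by
        rw [real_inner_comm]
        exact (Submodule.mem_orthogonal V _).mp (hsub x) _ (Submodule.coe_mem _)
      rw [inner_sub_right, h0, sub_zero]
  refine ⟨A, ⟨?_, ?_⟩, ?_⟩
  · intro x u
    have h2 : (inner ℝ x (A u) : ℝ) =
        inner ℝ (B (P u)) (P x) + inner ℝ (u - ↑(P u)) (x - ↑(P x)) := by
      rw [real_inner_comm, hInner]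
    rw [hInner x u, h2]
    congr 1
    · rw [hB.1]; exact real_inner_comm _ _
    · exact real_inner_comm _ _
  · intro x hx
    rw [hInner]
    rcases eq_or_ne (P x) 0 with h | h
    · have hx' : x - ↑(P x) ≠ 0 := by
        rw [h]; simpa using hx
      have : 0 < ⟪x - ↑(P x), x - ↑(P x)⟫ := by
        rw [real_inner_self_eq_norm_mul_norm]
        exact mul_pos (norm_pos_iff.mpr hx') (norm_pos_iff.mpr hx')
      have h0 : ⟪B (P x), P x⟫ = 0 := by rw [h]; simp
      linarith
    · have h1 : 0 < ⟪B (P x), P x⟫ := hB.2 _ h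
      have h2 : 0 ≤ ⟪x - ↑(P x), x - ↑(P x)⟫ := real_inner_self_nonneg
      linarith
  · intro x y'
    have hPx : P (x : H) = x := Submodule.orthogonalProjectionOnto_mem_subspace_eq_self x
    rw [hInner, hPx]
    have hPy : P (y' : H) = y' := Submodule.orthogonalProjectionOnto_mem_subspace_eq_self y'
    rw [hPy]
    simp

/-- Any generalized Mahalanobis operator on `H` restricts to one on `V` agreeing with it. -/
private lemma exists_restrict {H : Type*} [NormedAddCommGroup H] [InnerProductSpace ℝ H]
    [CompleteSpace H] (V : Submodule ℝ H) [FiniteDimensional ℝ V]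
    (A : H →L[ℝ] H) (hA : IsGenMahalanobis A) :
    ∃ B : V →ₗ[ℝ] V, IsGenMahalanobisLin B ∧
      ∀ x y' : V, ⟪A (x : H), (y' : H)⟫ = ⟪B x, y'⟫ := by
  have : CompleteSpace V := FiniteDimensional.complete ℝ V
  refine ⟨(V.orthogonalProjectionOnto).toLinearMap ∘ₗ ((A : H →ₗ[ℝ] H) ∘ₗ V.subtype), ?_, ?_⟩
  · constructor
    · intro x u
      have h1 : ∀ a b : V, ⟪V.orthogonalProjectionOnto (A (a : H)), b⟫ = ⟪A (a : H), (b : H)⟫ :=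
        fun a b => Submodule.inner_orthogonalProjectionOnto_eq_of_mem_right (K := V) b (A a)
      simp only [LinearMap.coe_comp, Function.comp_apply, ContinuousLinearMap.coe_coe,
        Submodule.coe_subtype]
      rw [h1 x u, Submodule.inner_orthogonalProjectionOnto_eq_of_mem_left (K := V) x (A ↑u), hA.1]
    · intro x hx
      have h1 : ⟪V.orthogonalProjectionOnto (A (x : H)), x⟫ = ⟪A (x : H), (x : H)⟫ :=
        Submodule.inner_orthogonalProjectionOnto_eq_of_mem_right (K := V) x (A x)
      simp only [LinearMap.coe_comp, Function.comp_apply, ContinuousLinearMap.coe_coe,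
        Submodule.coe_subtype]
      rw [h1]
      exact hA.2 _ (by simpa [Submodule.coe_eq_zero] using hx)
  · intro x y'
    simp only [LinearMap.coe_comp, Function.comp_apply, ContinuousLinearMap.coe_coe,
      Submodule.coe_subtype]
    exact (Submodule.inner_orthogonalProjectionOnto_eq_of_mem_right (K := V) y' (A x)).symm

/-- Representer theorem for the triplet task. Let `A*` (on `H`) and `B*`
(on `V`) be generalized Mahalanobis operators agreeing on `V`. Then `A*` minimizes the
triplet objective `g` over generalized Mahalanobis operators on `H` iff `B*` minimizes `g_V`
over generalized Mahalanobis operators on `V`, and in this case `g(A*) = g_V(B*)`. -/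
theorem representer_theorem_triplet
    {H : Type*} [NormedAddCommGroup H] [InnerProductSpace ℝ H] [CompleteSpace H]
    (V : Submodule ℝ H) [FiniteDimensional ℝ V]
    {n : ℕ} (ℓ : ℝ → ℝ → ℝ) (z₁ z₂ z₃ : Fin n → H) (y : Fin n → ℝ)
    (hz₁ : ∀ i, z₁ i ∈ V) (hz₂ : ∀ i, z₂ i ∈ V) (hz₃ : ∀ i, z₃ i ∈ V)
    (hy : ∀ i, y i = 1 ∨ y i = -1)
    (Astar : H →L[ℝ] H) (hAstar : IsGenMahalanobis Astar)
    (Bstar : V →ₗ[ℝ] V) (hBstar : IsGenMahalanobisLin Bstar)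
    (hagree : ∀ x y' : V, ⟪Astar (x : H), (y' : H)⟫ = ⟪Bstar x, y'⟫) :
    ((∀ (A : H →L[ℝ] H), IsGenMahalanobis A →
        tripObj ℓ z₁ z₂ z₃ y ⇑Astar ≤ tripObj ℓ z₁ z₂ z₃ y ⇑A) ↔
      (∀ (B : V →ₗ[ℝ] V), IsGenMahalanobisLin B →
        tripObj ℓ (fun i => (⟨z₁ i, hz₁ i⟩ : V)) (fun i => (⟨z₂ i, hz₂ i⟩ : V))
            (fun i => (⟨z₃ i, hz₃ i⟩ : V)) y ⇑Bstar ≤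
          tripObj ℓ (fun i => (⟨z₁ i, hz₁ i⟩ : V)) (fun i => (⟨z₂ i, hz₂ i⟩ : V))
            (fun i => (⟨z₃ i, hz₃ i⟩ : V)) y ⇑B)) ∧
    ((∀ (A : H →L[ℝ] H), IsGenMahalanobis A →
        tripObj ℓ z₁ z₂ z₃ y ⇑Astar ≤ tripObj ℓ z₁ z₂ z₃ y ⇑A) →
      tripObj ℓ z₁ z₂ z₃ y ⇑Astar =
        tripObj ℓ (fun i => (⟨z₁ i, hz₁ i⟩ : V)) (fun i => (⟨z₂ i, hz₂ i⟩ : V))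
          (fun i => (⟨z₃ i, hz₃ i⟩ : V)) y ⇑Bstar) := by
  have hstar := tripObj_eq_of_agree V ℓ z₁ z₂ z₃ y hz₁ hz₂ hz₃ ⇑Astar Bstar hagree
  constructor
  · constructor
    · intro hmin B hB
      obtain ⟨A, hA, hab⟩ := exists_ext V B hB
      calc tripObj ℓ _ _ _ y ⇑Bstar = tripObj ℓ z₁ z₂ z₃ y ⇑Astar := hstar.symm
        _ ≤ tripObj ℓ z₁ z₂ z₃ y ⇑A := hmin A hA
        _ = _ := tripObj_eq_of_agree V ℓ z₁ z₂ z₃ y hz₁ hz₂ hz₃ ⇑A B hab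
    · intro hmin A hA
      obtain ⟨B, hB, hab⟩ := exists_restrict V A hA
      calc tripObj ℓ z₁ z₂ z₃ y ⇑Astar = _ := hstar
        _ ≤ _ := hmin B hB
        _ = tripObj ℓ z₁ z₂ z₃ y ⇑A :=
          (tripObj_eq_of_agree V ℓ z₁ z₂ z₃ y hz₁ hz₂ hz₃ ⇑A B hab).symm
  · intro _
    exact hstar
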